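/- Let m ≥ 3 and let f, ḟ : ZMod m → ℝ³. Let n ∈ ℝ³ with ‖n‖ = 1, let h, ḣ ∈ ℝ, and suppose ⟨fᵢ, n⟩ = h and ⟨ḟᵢ, n⟩ = ḣ for all i. For each i ∈ ZMod m let Nᵢ ∈ ℝ³ with ‖Nᵢ‖ = 1 and let ḣᵢ ∈ ℝ, and suppose: f_{i+1} ≠ fᵢ; ⟨f_{i+1} − fᵢ, Nᵢ⟩ = 0; ⟨ḟᵢ, Nᵢ⟩ = ḣᵢ and ⟨ḟ_{i+1}, Nᵢ⟩ = ḣᵢ. Set ℓᵢ := ‖f_{i+1} − fᵢ‖ and sᵢ := ⟨n × Nᵢ, (f_{i+1} − fᵢ)/ℓᵢ⟩, and assume sᵢ ≠ 0 for all i. Then ½ ∑_{i ∈ ZMod m} (⟨ḟᵢ × f_{i+1}, n⟩ + ⟨fᵢ × ḟ_{i+1}, n⟩) = 2ḣH + ∑_{i ∈ ZMod m} (ℓᵢ/sᵢ)(ḣᵢ − ḣ), where H := ½ ∑_{i ∈ ZMod m} ℓᵢ (1 − ⟨n, Nᵢ⟩)/sᵢ. -/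

import Mathlib

open scoped RealInnerProductSpace

/-- The vector `(x, y, z)` in Euclidean 3-space. -/
noncomputable def e3 (x y z : ℝ) : EuclideanSpace ℝ (Fin 3) :=
  (WithLp.equiv 2 _).symm ![x, y, z]

/-- The cross product in Euclidean 3-space. -/
noncomputable def cross3 (a b : EuclideanSpace ℝ (Fin 3)) : EuclideanSpace ℝ (Fin 3) :=
  e3 (a 1 * b 2 - a 2 * b 1) (a 2 * b 0 - a 0 * b 2) (a 0 * b 1 - a 1 * b 0)

/-- Inverse stereographic projection `n(z) = (1 + |z|²)⁻¹ (2 Re z, 2 Im z, |z|² - 1)`. -/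
noncomputable def invStereo (z : ℂ) : EuclideanSpace ℝ (Fin 3) :=
  (1 + ‖z‖ ^ 2)⁻¹ • e3 (2 * z.re) (2 * z.im) (‖z‖ ^ 2 - 1)

/-- The Weierstrass edge vector `W = (gⱼ - gᵢ)⁻¹ • (1 - gᵢgⱼ, √(-1)(1 + gᵢgⱼ), gᵢ + gⱼ) ∈ ℂ³`. -/
noncomputable def wVec (gi gj : ℂ) : Fin 3 → ℂ :=
  (gj - gi)⁻¹ • ![1 - gi * gj, Complex.I * (1 + gi * gj), gi + gj]

/-- Componentwise imaginary part of a vector in ℂ³, as a vector in ℝ³. -/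
noncomputable def imVec (W : Fin 3 → ℂ) : EuclideanSpace ℝ (Fin 3) :=
  e3 (W 0).im (W 1).im (W 2).im

/-- Componentwise real part of a vector in ℂ³, as a vector in ℝ³. -/
noncomputable def reVec (W : Fin 3 → ℂ) : EuclideanSpace ℝ (Fin 3) :=
  e3 (W 0).re (W 1).re (W 2).re


namespace Stmt10Aux

lemma inner3 (a b : EuclideanSpace ℝ (Fin 3)) : ⟪a,b⟫ = a 0 * b 0 + a 1 * b 1 + a 2 * b 2 := by
  simp [PiLp.inner_apply, Fin.sum_univ_three, RCLike.inner_apply, mul_comm]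

lemma cross0 (a b : EuclideanSpace ℝ (Fin 3)) : cross3 a b 0 = a 1 * b 2 - a 2 * b 1 := rfl
lemma cross1 (a b : EuclideanSpace ℝ (Fin 3)) : cross3 a b 1 = a 2 * b 0 - a 0 * b 2 := rfl
lemma cross2 (a b : EuclideanSpace ℝ (Fin 3)) : cross3 a b 2 = a 0 * b 1 - a 1 * b 0 := rfl

lemma ext3 {a b : EuclideanSpace ℝ (Fin 3)} (h0 : a 0 = b 0) (h1 : a 1 = b 1)
    (h2 : a 2 = b 2) : a = b := by
  ext i
  fin_cases i
  exacts [h0, h1, h2]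

lemma cyc3 (a b c : EuclideanSpace ℝ (Fin 3)) : ⟪cross3 a b, c⟫ = ⟪a, cross3 b c⟫ := by
  simp only [inner3, cross0, cross1, cross2]; ring

lemma anti3 (a b c : EuclideanSpace ℝ (Fin 3)) : ⟪cross3 a b, c⟫ = -⟪cross3 b a, c⟫ := by
  simp only [inner3, cross0, cross1, cross2]; ring

lemma cc3 (a b c : EuclideanSpace ℝ (Fin 3)) :
    cross3 (cross3 a b) c = ⟪a,c⟫ • b - ⟪b,c⟫ • a := by
  refine ext3 ?_ ?_ ?_ <;>
    simp only [PiLp.sub_apply, PiLp.smul_apply, smul_eq_mul, inner3, cross0, cross1, cross2] <;>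
    ring

lemma parallel3 {a b : EuclideanSpace ℝ (Fin 3)} (hab : cross3 a b = 0) :
    ⟪a,a⟫ • b = ⟪a,b⟫ • a := by
  have h0 : a 1 * b 2 - a 2 * b 1 = 0 := congrFun (congrArg WithLp.ofLp hab) 0
  have h1 : a 2 * b 0 - a 0 * b 2 = 0 := congrFun (congrArg WithLp.ofLp hab) 1
  have h2 : a 0 * b 1 - a 1 * b 0 = 0 := congrFun (congrArg WithLp.ofLp hab) 2
  refine ext3 ?_ ?_ ?_ <;>
    simp only [PiLp.smul_apply, smul_eq_mul, inner3]
  · linear_combination (-(a 1) : ℝ) * h2 + a 2 * h1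
  · linear_combination ((a 0) : ℝ) * h2 - a 2 * h0
  · linear_combination (-(a 0) : ℝ) * h1 + a 1 * h0

lemma csl3 (c : ℝ) (a b : EuclideanSpace ℝ (Fin 3)) :
    cross3 (c • a) b = c • cross3 a b := by
  refine ext3 ?_ ?_ ?_ <;>
    simp only [PiLp.smul_apply, smul_eq_mul, cross0, cross1, cross2] <;> ring

lemma car3 (a b c : EuclideanSpace ℝ (Fin 3)) :
    cross3 a (b + c) = cross3 a b + cross3 a c := by
  refine ext3 ?_ ?_ ?_ <;>
    simp only [PiLp.add_apply, cross0, cross1, cross2] <;> ring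

end Stmt10Aux

open Stmt10Aux

/-- First variation of the signed area of a planar face of a trivalent polyhedral surface
under a face-normal-preserving deformation:
`½ d(Area) = 2ḣH + ∑ᵢ (ℓᵢ/sᵢ)(ḣᵢ − ḣ)` where `H = ½ ∑ᵢ ℓᵢ(1 − ⟨n, Nᵢ⟩)/sᵢ`. -/
theorem stmt_10 (m : ℕ) [NeZero m] (hm : 3 ≤ m)
    (f fdot : ZMod m → EuclideanSpace ℝ (Fin 3))
    (n : EuclideanSpace ℝ (Fin 3)) (hn : ‖n‖ = 1)
    (h hdot : ℝ)
    (hf : ∀ i, ⟪f i, n⟫ = h) (hfdot : ∀ i, ⟪fdot i, n⟫ = hdot)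
    (N : ZMod m → EuclideanSpace ℝ (Fin 3)) (hN : ∀ i, ‖N i‖ = 1)
    (hdoti : ZMod m → ℝ)
    (hne : ∀ i, f (i + 1) ≠ f i)
    (horth : ∀ i, ⟪f (i + 1) - f i, N i⟫ = 0)
    (hh1 : ∀ i, ⟪fdot i, N i⟫ = hdoti i) (hh2 : ∀ i, ⟪fdot (i + 1), N i⟫ = hdoti i)
    (ℓ : ZMod m → ℝ) (hℓ : ∀ i, ℓ i = ‖f (i + 1) - f i‖)
    (s : ZMod m → ℝ) (hs : ∀ i, s i = ⟪cross3 n (N i), (ℓ i)⁻¹ • (f (i + 1) - f i)⟫)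
    (hs0 : ∀ i, s i ≠ 0)
    (H : ℝ) (hH : H = (1 / 2) * ∑ i, ℓ i * (1 - ⟪n, N i⟫) / s i) :
    (1 / 2) * ∑ i, (⟪cross3 (fdot i) (f (i + 1)), n⟫ + ⟪cross3 (f i) (fdot (i + 1)), n⟫) =
      2 * hdot * H + ∑ i, (ℓ i / s i) * (hdoti i - hdot) := by
  classical
  set e : ZMod m → EuclideanSpace ℝ (Fin 3) := fun i => f (i + 1) - f i with he
  have hℓ0 : ∀ i, ℓ i ≠ 0 := fun i => by
    rw [hℓ]; exact norm_ne_zero_iff.mpr (sub_ne_zero.mpr (hne i))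
  -- the key edge formula
  have hedge : ∀ i, ∀ v : EuclideanSpace ℝ (Fin 3),
      ⟪cross3 v (e i), n⟫ = ℓ i / s i * (⟪v, N i⟫ - ⟪n, N i⟫ * ⟪v, n⟫) := by
    intro i v
    set u := cross3 n (N i) with hu
    have hen : ⟪e i, n⟫ = 0 := by
      simp only [he, inner_sub_left, hf, sub_self]
    have heN : ⟪e i, N i⟫ = 0 := horth i
    have h1n : ⟪n, e i⟫ = 0 := by rw [real_inner_comm]; exact hen
    have h1N : ⟪N i, e i⟫ = 0 := by rw [real_inner_comm]; exact heN
    have hue : cross3 u (e i) = 0 := by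
      rw [hu, cc3, h1n, h1N]; simp
    have hpar : ⟪u, u⟫ • e i = ⟪u, e i⟫ • u := parallel3 hue
    have hs' : s i = ⟪u, (ℓ i)⁻¹ • e i⟫ := hs i
    have hsue : ⟪u, e i⟫ = s i * ℓ i := by
      rw [hs', real_inner_smul_right, inv_mul_eq_div, div_mul_cancel₀ _ (hℓ0 i)]
    have hee : ⟪e i, e i⟫ = ℓ i ^ 2 := by
      rw [real_inner_self_eq_norm_sq, hℓ i]
    have hl2 : (ℓ i : ℝ) ^ 2 ≠ 0 := pow_ne_zero _ (hℓ0 i)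
    have key : ⟪u, u⟫ * ⟪e i, e i⟫ = ⟪u, e i⟫ * ⟪u, e i⟫ := by
      have h4 : ⟪(⟪u, u⟫ • e i : EuclideanSpace ℝ (Fin 3)), e i⟫
          = ⟪(⟪u, e i⟫ • u : EuclideanSpace ℝ (Fin 3)), e i⟫ := by rw [hpar]
      rw [real_inner_smul_left, real_inner_smul_left] at h4
      exact h4
    have huu : ⟪u, u⟫ = s i ^ 2 := by
      apply mul_right_cancel₀ hl2
      calc ⟪u, u⟫ * ℓ i ^ 2 = ⟪u, u⟫ * ⟪e i, e i⟫ := by rw [hee]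
        _ = ⟪u, e i⟫ * ⟪u, e i⟫ := key
        _ = s i ^ 2 * ℓ i ^ 2 := by rw [hsue]; ring
    have h1 : (s i ^ 2) • e i = (s i * ℓ i) • u := by rw [← huu, ← hsue]; exact hpar
    have hs2 : (s i ^ 2 : ℝ) ≠ 0 := pow_ne_zero _ (hs0 i)
    have h2 : e i = (ℓ i / s i) • u := by
      calc e i = (s i ^ 2)⁻¹ • ((s i ^ 2) • e i) := by
            rw [smul_smul, inv_mul_cancel₀ hs2, one_smul]
        _ = (s i ^ 2)⁻¹ • ((s i * ℓ i) • u) := by rw [h1]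
        _ = (ℓ i / s i) • u := by
            rw [smul_smul]
            congr 1
            field_simp [hs0 i]
    have hun : cross3 u n = N i - ⟪n, N i⟫ • n := by
      rw [hu, cc3, real_inner_self_eq_norm_sq, hn, real_inner_comm (N i) n]
      simp
    have h3 : cross3 (e i) n = (ℓ i / s i) • (N i - ⟪n, N i⟫ • n) := by
      rw [h2, csl3, hun]
    rw [cyc3, h3, real_inner_smul_right, inner_sub_right, real_inner_smul_right]
  -- per-term identity
  have hterm : ∀ i : ZMod m,
      ⟪cross3 (fdot i) (f (i + 1)), n⟫ + ⟪cross3 (f i) (fdot (i + 1)), n⟫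
        = 2 * (ℓ i / s i * (hdoti i - ⟪n, N i⟫ * hdot))
          + (⟪cross3 (f (i + 1)) (fdot (i + 1)), n⟫ - ⟪cross3 (f i) (fdot i), n⟫) := by
    intro i
    have hA1 : ⟪cross3 (fdot i) (e i), n⟫ = ℓ i / s i * (hdoti i - ⟪n, N i⟫ * hdot) := by
      rw [hedge i, hh1 i, hfdot i]
    have hA2 : ⟪cross3 (fdot (i + 1)) (e i), n⟫ = ℓ i / s i * (hdoti i - ⟪n, N i⟫ * hdot) := by
      rw [hedge i, hh2 i, hfdot (i + 1)]
    have hf1 : f (i + 1) = e i + f i := by simp [he]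
    have d1 : ⟪cross3 (fdot i) (f (i + 1)), n⟫
        = ⟪cross3 (fdot i) (e i), n⟫ + ⟪cross3 (fdot i) (f i), n⟫ := by
      rw [hf1, car3, inner_add_left]
    have d2 : ⟪cross3 (fdot (i + 1)) (f (i + 1)), n⟫
        = ⟪cross3 (fdot (i + 1)) (e i), n⟫ + ⟪cross3 (fdot (i + 1)) (f i), n⟫ := by
      rw [hf1, car3, inner_add_left]
    have a1 : ⟪cross3 (f i) (fdot (i + 1)), n⟫ = -⟪cross3 (fdot (i + 1)) (f i), n⟫ :=
      anti3 _ _ _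
    have a2 : ⟪cross3 (f (i + 1)) (fdot (i + 1)), n⟫
        = -⟪cross3 (fdot (i + 1)) (f (i + 1)), n⟫ := anti3 _ _ _
    have a3 : ⟪cross3 (fdot i) (f i), n⟫ = -⟪cross3 (f i) (fdot i), n⟫ := anti3 _ _ _
    rw [d1, a1, a3]
    rw [d2] at a2
    linarith [hA1, hA2, a2]
  -- sum it up
  have hshift : ∑ i : ZMod m, (⟪cross3 (f (i + 1)) (fdot (i + 1)), n⟫
      - ⟪cross3 (f i) (fdot i), n⟫) = 0 := by
    rw [Finset.sum_sub_distrib]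
    rw [show ∑ i : ZMod m, ⟪cross3 (f (i + 1)) (fdot (i + 1)), n⟫
        = ∑ i : ZMod m, ⟪cross3 (f i) (fdot i), n⟫ from
      Fintype.sum_equiv (Equiv.addRight (1 : ZMod m)) _ _ (fun i => rfl)]
    ring
  have e1 : ∑ i : ZMod m, (⟪cross3 (fdot i) (f (i + 1)), n⟫
        + ⟪cross3 (f i) (fdot (i + 1)), n⟫)
      = ∑ i : ZMod m, 2 * (ℓ i / s i * (hdoti i - ⟪n, N i⟫ * hdot)) := by
    rw [Finset.sum_congr rfl fun i _ => hterm i, Finset.sum_add_distrib, hshift, add_zero]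
  rw [e1, hH]
  rw [show (2 : ℝ) * hdot * ((1 : ℝ) / 2 * ∑ i, ℓ i * (1 - ⟪n, N i⟫) / s i)
      = ∑ i, hdot * (ℓ i * (1 - ⟪n, N i⟫) / s i) from by rw [← Finset.mul_sum]; ring]
  rw [Finset.mul_sum, ← Finset.sum_add_distrib]
  refine Finset.sum_congr rfl fun i _ => ?_
  field_simp [hs0 i]
  ring
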